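/- Let M be a matroid on a finite ground set U, let N ⊆ U, let μ be a probability measure on the (finite) powerset of U, and let c ∈ ℝ. For T ⊆ N and e ∈ U define P(T, e) = μ{ R ⊆ U : e ∈ span(((R ∩ N) ∪ T) \ {e}) }, and define the family 𝒯 = { T ⊆ N : for all e ∈ N \ T, P(T, e) ≤ c }. Then: (i) N ∈ 𝒯; (ii) if T₁ ∈ 𝒯 and T₂ ∈ 𝒯 then T₁ ∩ T₂ ∈ 𝒯; and (iii) 𝒯 has a unique minimum element, i.e., there exists S ∈ 𝒯 with S ⊆ T for every T ∈ 𝒯. -/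
import Mathlib


open Classical

/-- A matroid on a finite ground set `α`, given by its independent sets. -/
structure FinMatroid (α : Type*) [DecidableEq α] [Fintype α] where
  /-- The independent sets. -/
  Indep : Finset α → Prop
  indep_empty : Indep ∅
  indep_subset : ∀ ⦃I J : Finset α⦄, Indep J → I ⊆ J → Indep I
  indep_exchange : ∀ ⦃I J : Finset α⦄, Indep I → Indep J → I.card < J.card →
    ∃ e ∈ J, e ∉ I ∧ Indep (insert e I)

namespace FinMatroid

variable {α : Type*} [DecidableEq α] [Fintype α]

/-- A basis of the matroid: a maximal independent set. -/
def Base (M : FinMatroid α) (B : Finset α) : Prop :=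
  M.Indep B ∧ ∀ e : α, e ∉ B → ¬ M.Indep (insert e B)

/-- The rank of a set: the size of a largest independent subset. -/
noncomputable def rank (M : FinMatroid α) (S : Finset α) : ℕ :=
  (S.powerset.filter M.Indep).sup Finset.card

/-- The span of a set: the elements whose insertion does not increase the rank. -/
noncomputable def span (M : FinMatroid α) (S : Finset α) : Finset α :=
  Finset.univ.filter fun e => M.rank (insert e S) = M.rank S

end FinMatroid

namespace FinMatroid

variable {α : Type*} [DecidableEq α] [Fintype α] (M : FinMatroid α)

lemma rank_mono {S S' : Finset α} (h : S ⊆ S') : M.rank S ≤ M.rank S' :=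
  Finset.sup_mono (Finset.filter_subset_filter _ (Finset.powerset_mono.2 h))

lemma card_le_rank {I S : Finset α} (hI : M.Indep I) (hIS : I ⊆ S) : I.card ≤ M.rank S :=
  Finset.le_sup (Finset.mem_filter.2 ⟨Finset.mem_powerset.2 hIS, hI⟩)

lemma exists_max_indep (S : Finset α) : ∃ I ⊆ S, M.Indep I ∧ I.card = M.rank S := by
  have hne : (S.powerset.filter M.Indep).Nonempty :=
    ⟨∅, Finset.mem_filter.2 ⟨Finset.mem_powerset.2 (Finset.empty_subset _), M.indep_empty⟩⟩
  obtain ⟨I, hI, hcard⟩ := Finset.exists_mem_eq_sup _ hne Finset.card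
  rw [Finset.mem_filter, Finset.mem_powerset] at hI
  exact ⟨I, hI.1, hI.2, hcard.symm⟩

lemma extend_indep {S I : Finset α} (hI : M.Indep I) (hIS : I ⊆ S) :
    ∃ I', I ⊆ I' ∧ I' ⊆ S ∧ M.Indep I' ∧ I'.card = M.rank S := by
  obtain ⟨n, hn⟩ : ∃ n, M.rank S - I.card = n := ⟨_, rfl⟩
  induction n generalizing I with
  | zero =>
      have : I.card = M.rank S :=
        le_antisymm (M.card_le_rank hI hIS) (Nat.le_of_sub_eq_zero hn)
      exact ⟨I, subset_rfl, hIS, hI, this⟩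
  | succ n ih =>
      have hlt : I.card < M.rank S := by omega
      obtain ⟨J, hJS, hJind, hJcard⟩ := M.exists_max_indep S
      obtain ⟨x, hxJ, hxI, hind⟩ := M.indep_exchange hI hJind (by omega)
      have hsub : insert x I ⊆ S := Finset.insert_subset (hJS hxJ) hIS
      have hcard : (insert x I).card = I.card + 1 := Finset.card_insert_of_notMem hxI
      obtain ⟨I', h1, h2, h3, h4⟩ := ih hind hsub (by omega)
      exact ⟨I', (Finset.subset_insert _ _).trans h1, h2, h3, h4⟩

lemma mem_span_iff {S : Finset α} {e : α} :
    e ∈ M.span S ↔ M.rank (insert e S) = M.rank S := by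
  simp [span]

lemma span_mono {S S' : Finset α} (h : S ⊆ S') : M.span S ⊆ M.span S' := by
  intro e he
  rw [mem_span_iff] at he ⊢
  by_cases heS' : e ∈ S'
  · rw [Finset.insert_eq_self.2 heS']
  by_contra hne
  have hlt : M.rank S' < M.rank (insert e S') :=
    lt_of_le_of_ne (M.rank_mono (Finset.subset_insert _ _)) (Ne.symm hne)
  obtain ⟨I, hIS, hIind, hIcard⟩ := M.exists_max_indep S
  obtain ⟨I', hII', hI'S, hI'ind, hI'card⟩ := M.extend_indep hIind (hIS.trans h)
  obtain ⟨J, hJS, hJind, hJcard⟩ := M.exists_max_indep (insert e S')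
  obtain ⟨x, hxJ, hxI', hind⟩ := M.indep_exchange hI'ind hJind (by omega)
  have hxe : x = e := by
    by_contra hxe
    have hxS' : x ∈ S' := by
      rcases Finset.mem_insert.1 (hJS hxJ) with h1 | h1
      · exact absurd h1 hxe
      · exact h1
    have := M.card_le_rank hind (Finset.insert_subset hxS' hI'S)
    rw [Finset.card_insert_of_notMem hxI'] at this
    omega
  rw [hxe] at hind
  -- insert e I is independent
  have heI : e ∉ I := fun hh => heS' (h (hIS hh))
  have hindI : M.Indep (insert e I) :=
    M.indep_subset hind (Finset.insert_subset_insert _ hII')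
  have := M.card_le_rank hindI (Finset.insert_subset_insert _ hIS)
  rw [Finset.card_insert_of_notMem heI] at this
  omega

end FinMatroid

/-- Uniqueness of `Select(N, c)`: the family `𝒯` of sets `T ⊆ N` such that every
`e ∈ N \ T` satisfies `P(T, e) ≤ c` contains `N`, is closed under intersection, and has a
unique minimum element. -/
theorem stmt_5 {α : Type*} [DecidableEq α] [Fintype α] (M : FinMatroid α)
    (N : Finset α) (μ : Finset α → ℝ)
    (hμ0 : ∀ R : Finset α, 0 ≤ μ R) (hμ1 : ∑ R : Finset α, μ R = 1) (c : ℝ) :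
    let P : Finset α → α → ℝ := fun T e =>
      ∑ R : Finset α, if e ∈ M.span (((R ∩ N) ∪ T).erase e) then μ R else 0
    let 𝒯 : Finset α → Prop := fun T => T ⊆ N ∧ ∀ e ∈ N \ T, P T e ≤ c
    𝒯 N ∧ (∀ T₁ T₂ : Finset α, 𝒯 T₁ → 𝒯 T₂ → 𝒯 (T₁ ∩ T₂)) ∧
      (∃ S : Finset α, 𝒯 S ∧ ∀ T : Finset α, 𝒯 T → S ⊆ T) := by
  intro P 𝒯
  have hPmono : ∀ T T' : Finset α, T ⊆ T' → ∀ e, P T e ≤ P T' e := by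
    intro T T' h e
    apply Finset.sum_le_sum
    intro R _
    by_cases hmem : e ∈ M.span (((R ∩ N) ∪ T).erase e)
    · have h2 : e ∈ M.span (((R ∩ N) ∪ T').erase e) :=
        M.span_mono (Finset.erase_subset_erase _ (Finset.union_subset_union_right h)) hmem
      simp [hmem, h2]
    · simp only [if_neg hmem]
      split
      · exact hμ0 R
      · exact le_rfl
  have hN : 𝒯 N := ⟨subset_rfl, by simp⟩
  have hinter : ∀ T₁ T₂ : Finset α, 𝒯 T₁ → 𝒯 T₂ → 𝒯 (T₁ ∩ T₂) := by
    intro T₁ T₂ h₁ h₂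
    refine ⟨Finset.inter_subset_left.trans h₁.1, fun e he => ?_⟩
    rw [Finset.mem_sdiff, Finset.mem_inter] at he
    by_cases h : e ∈ T₁
    · have heT₂ : e ∉ T₂ := fun hh => he.2 ⟨h, hh⟩
      exact (hPmono _ _ Finset.inter_subset_right e).trans
        (h₂.2 e (Finset.mem_sdiff.2 ⟨he.1, heT₂⟩))
    · exact (hPmono _ _ Finset.inter_subset_left e).trans
        (h₁.2 e (Finset.mem_sdiff.2 ⟨he.1, h⟩))
  refine ⟨hN, hinter, ?_⟩
  have hne : (Finset.univ.filter (fun T : Finset α => 𝒯 T)).Nonempty :=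
    ⟨N, Finset.mem_filter.2 ⟨Finset.mem_univ _, hN⟩⟩
  obtain ⟨S, hS, hmin⟩ := Finset.exists_min_image _ Finset.card hne
  rw [Finset.mem_filter] at hS
  refine ⟨S, hS.2, fun T hT => ?_⟩
  have h𝒯 := hinter S T hS.2 hT
  have hle := hmin (S ∩ T) (Finset.mem_filter.2 ⟨Finset.mem_univ _, h𝒯⟩)
  exact Finset.inter_eq_left.1
    (Finset.eq_of_subset_of_card_le Finset.inter_subset_left hle)
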